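/- Let 1 < p < 2 and ω a positive measure, and let g, b ≥ 0 be measurable functions. Set Λ^p = ∫(g²+b²)^{p/2} dω − ∫ g^p dω. Then with η = 1/2 one has ∫ b^p dω ≤ max{ η^{−p−3} Λ^p , (1−η)^{−1} (Λ^p)^{p/2} (∫ g^p dω)^{1−p/2} }. -/

import Mathlib

open MeasureTheory
open scoped ENNReal

section AuxLemmas
open Real


-- concavity consequence: ψ(s+t)+ψ(t) ≥ ψ(s)+ψ(2t) for concave rpow
lemma aux_concave_shift {q s t : ℝ} (hq0 : 0 < q) (hq1 : q < 1) (hs : 0 ≤ s) (hst : s ≤ t) :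
    s ^ q + (2*t) ^ q ≤ (s+t) ^ q + t ^ q := by
  have ht : 0 ≤ t := hs.trans hst
  rcases eq_or_lt_of_le ht with h0 | ht0
  · have hs0 : s = 0 := le_antisymm (by linarith) hs
    simp [hs0, ← h0]
  have hconc := Real.concaveOn_rpow hq0.le hq1.le
  have hden : 0 < 2*t - s := by linarith
  set μ : ℝ := t / (2*t - s) with hμ
  have hμ0 : 0 ≤ μ := by positivity
  have hμ1 : μ ≤ 1 := by rw [hμ, div_le_one hden]; linarith
  have h1 := hconc.2 (Set.mem_Ici.2 hs) (Set.mem_Ici.2 (by linarith : (0:ℝ) ≤ 2*t))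
    (by linarith : 0 ≤ 1 - μ) hμ0 (by ring)
  have h2 := hconc.2 (Set.mem_Ici.2 hs) (Set.mem_Ici.2 (by linarith : (0:ℝ) ≤ 2*t))
    hμ0 (by linarith : 0 ≤ 1 - μ) (by ring)
  have e1 : (1-μ) • s + μ • (2*t) = s + t := by
    have hk : μ * (2*t - s) = t := by rw [hμ]; exact div_mul_cancel₀ _ hden.ne'
    rw [smul_eq_mul, smul_eq_mul]; linear_combination hk
  have e2 : μ • s + (1-μ) • (2*t) = t := by
    have hk : μ * (2*t - s) = t := by rw [hμ]; exact div_mul_cancel₀ _ hden.ne'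
    rw [smul_eq_mul, smul_eq_mul]; linear_combination (-1) * hk
  rw [e1] at h1
  rw [e2] at h2
  simp only [smul_eq_mul] at h1 h2
  nlinarith [h1, h2]

-- chord bound: t^q + (2^q-1) s t^(q-1) ≤ (t+s)^q for 0 ≤ s ≤ t
lemma aux_chord {q s t : ℝ} (hq0 : 0 < q) (hq1 : q < 1) (hs : 0 ≤ s) (hst : s ≤ t) :
    t ^ q + ((2:ℝ) ^ q - 1) * s * t ^ (q-1) ≤ (t+s) ^ q := by
  have ht : 0 ≤ t := hs.trans hst
  rcases eq_or_lt_of_le ht with h0 | ht0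
  · have hs0 : s = 0 := le_antisymm (by linarith) hs
    simp [hs0, ← h0, Real.zero_rpow hq0.ne']
  have hconc := Real.concaveOn_rpow hq0.le hq1.le
  set μ : ℝ := s / t with hμ
  have hμ0 : 0 ≤ μ := by positivity
  have hμ1 : μ ≤ 1 := by rw [hμ, div_le_one ht0]; exact hst
  have h1 := hconc.2 (Set.mem_Ici.2 ht) (Set.mem_Ici.2 (by linarith : (0:ℝ) ≤ 2*t))
    (by linarith : 0 ≤ 1 - μ) hμ0 (by ring)
  have e1 : (1-μ) • t + μ • (2*t) = t + s := by
    rw [hμ, smul_eq_mul, smul_eq_mul]; field_simp [ht0.ne']; ring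
  rw [e1] at h1
  simp only [smul_eq_mul] at h1
  have h2t : (2*t) ^ q = 2 ^ q * t ^ q := Real.mul_rpow (by norm_num) ht
  have htq : t ^ (q-1) = t ^ q / t := by
    rw [Real.rpow_sub ht0, Real.rpow_one]
  rw [h2t] at h1
  rw [htq]
  have key : (1-μ) * t ^ q + μ * (2 ^ q * t ^ q) = t ^ q + (2 ^ q - 1) * s * (t ^ q / t) := by
    rw [hμ]; field_simp; ring
  linarith [h1, key.symm.le]

-- rational-power certification: τ ≤ r ^ (n/d) from τ^d ≤ r^n
lemma aux_rat_pow {r τ : ℝ} (n d : ℕ) (hd : 0 < d) (hr : 0 ≤ r) (hτ : 0 ≤ τ)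
    (h : τ ^ d ≤ r ^ n) : τ ≤ r ^ ((n:ℝ)/(d:ℝ)) := by
  have hd' : (0:ℝ) < d := by exact_mod_cast hd
  have h1 : (τ ^ d : ℝ) ^ ((1:ℝ)/d) ≤ (r ^ n : ℝ) ^ ((1:ℝ)/d) :=
    Real.rpow_le_rpow (by positivity) h (by positivity)
  have e1 : (τ ^ d : ℝ) ^ ((1:ℝ)/d) = τ := by
    rw [← Real.rpow_natCast τ d, ← Real.rpow_mul hτ]
    rw [mul_one_div, div_self hd'.ne', Real.rpow_one]
  have e2 : (r ^ n : ℝ) ^ ((1:ℝ)/d) = r ^ ((n:ℝ)/d) := by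
    rw [← Real.rpow_natCast r n, ← Real.rpow_mul hr, mul_one_div]
  rwa [e1, e2] at h1

lemma aux_interval {q a b r τ : ℝ} (hq0 : 0 ≤ q) (ha : a ≤ q) (hb : q ≤ b) (hq1 : q ≤ 1)
    (hr0 : 0 < r) (hra : 1 + r ≤ (2:ℝ) ^ a) (hτ0 : 0 < τ) (hτ : τ ≤ r ^ b)
    (hsum : τ⁻¹/2 + (8 * r * (1+r)^2)⁻¹ ≤ 1) :
    (((2:ℝ)^q - 1) ^ q)⁻¹ / 2 + ((2:ℝ)^q - 1)⁻¹ * ((2:ℝ)^(2*q+3))⁻¹ ≤ 1 := by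
  set c : ℝ := (2:ℝ)^q - 1 with hc
  have h2a : (2:ℝ)^a ≤ 2^q := Real.rpow_le_rpow_of_exponent_le one_le_two ha
  have h2q2 : (2:ℝ)^q ≤ 2 := by
    calc (2:ℝ)^q ≤ 2^(1:ℝ) := Real.rpow_le_rpow_of_exponent_le one_le_two hq1
    _ = 2 := Real.rpow_one 2
  have hrc : r ≤ c := by rw [hc]; linarith
  have hc0 : 0 < c := lt_of_lt_of_le hr0 hrc
  have hr1 : r ≤ 1 := by linarith
  -- first term: c^q ≥ r^q ≥ r^b ≥ τ
  have h1 : τ ≤ c ^ q := by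
    calc τ ≤ r ^ b := hτ
    _ ≤ r ^ q := Real.rpow_le_rpow_of_exponent_ge hr0 hr1 hb
    _ ≤ c ^ q := Real.rpow_le_rpow hr0.le hrc (by linarith)
  have hcq0 : 0 < c ^ q := Real.rpow_pos_of_pos hc0 q
  have t1 : (c ^ q)⁻¹ ≤ τ⁻¹ := by
    exact inv_anti₀ hτ0 h1
  -- second term: 2^(2q+3) = 8 (2^q)^2 ≥ 8 (1+r)^2
  have h2 : 8 * (1+r)^2 ≤ (2:ℝ)^(2*q+3) := by
    have e8 : (2:ℝ)^(3:ℝ) = 8 := by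
      rw [show (3:ℝ) = ((3:ℕ):ℝ) by norm_num, Real.rpow_natCast]; norm_num
    have e : (2:ℝ)^(2*q+3) = (2:ℝ)^q * (2:ℝ)^q * 8 := by
      rw [show (2*q+3 : ℝ) = q + q + 3 by ring, Real.rpow_add two_pos, Real.rpow_add two_pos, e8]
    rw [e]
    have hq2 : 1 + r ≤ 2^q := le_trans hra h2a
    nlinarith [hq2, hr0]
  have h2' : (0:ℝ) < 8 * (1+r)^2 := by positivity
  have t2 : ((2:ℝ)^(2*q+3))⁻¹ ≤ (8 * (1+r)^2)⁻¹ := inv_anti₀ h2' h2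
  have t3 : c⁻¹ ≤ r⁻¹ := inv_anti₀ hr0 hrc
  have t4 : c⁻¹ * ((2:ℝ)^(2*q+3))⁻¹ ≤ r⁻¹ * (8 * (1+r)^2)⁻¹ := by
    apply mul_le_mul t3 t2 (by positivity) (by positivity)
  have e5 : r⁻¹ * (8 * (1+r)^2)⁻¹ = (8 * r * (1+r)^2)⁻¹ := by
    rw [← mul_inv]; ring_nf
  rw [e5] at t4
  have t5 : (c ^ q)⁻¹ / 2 ≤ τ⁻¹ / 2 := by linarith
  linarith

lemma aux_numeric {q : ℝ} (h1 : 1/2 ≤ q) (h2 : q ≤ 1) :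
    (((2:ℝ)^q - 1) ^ q)⁻¹ / 2 + ((2:ℝ)^q - 1)⁻¹ * ((2:ℝ)^(2*q+3))⁻¹ ≤ 1 := by
  have hq0 : (0:ℝ) ≤ q := by linarith
  rcases le_total q (11/20 : ℝ) with hc1 | hc1
  · have hra : (1:ℝ) + 207/500 ≤ (2:ℝ) ^ ((1:ℝ)/2) := by
      have := aux_rat_pow (r := 2) (τ := 1 + 207/500) 1 2 (by norm_num) (by norm_num)
        (by norm_num) (by norm_num)
      push_cast at this; exact this
    have hτ : (123/200 : ℝ) ≤ (207/500 : ℝ) ^ ((11:ℝ)/20) := by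
      have := aux_rat_pow (r := 207/500) (τ := 123/200) 11 20 (by norm_num) (by norm_num)
        (by norm_num) (by norm_num)
      push_cast at this; exact this
    exact aux_interval hq0 h1 hc1 h2 (by norm_num) hra (by norm_num) hτ (by norm_num)
  rcases le_total q (13/20 : ℝ) with hc2 | hc2
  · have hra : (1:ℝ) + 23/50 ≤ (2:ℝ) ^ ((11:ℝ)/20) := by
      have := aux_rat_pow (r := 2) (τ := 1 + 23/50) 11 20 (by norm_num) (by norm_num)
        (by norm_num) (by norm_num)
      push_cast at this; exact this
    have hτ : (603/1000 : ℝ) ≤ (23/50 : ℝ) ^ ((13:ℝ)/20) := by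
      have := aux_rat_pow (r := 23/50) (τ := 603/1000) 13 20 (by norm_num) (by norm_num)
        (by norm_num) (by norm_num)
      push_cast at this; exact this
    exact aux_interval hq0 hc1 hc2 h2 (by norm_num) hra (by norm_num) hτ (by norm_num)
  rcases le_total q (4/5 : ℝ) with hc3 | hc3
  · have hra : (1:ℝ) + 71/125 ≤ (2:ℝ) ^ ((13:ℝ)/20) := by
      have := aux_rat_pow (r := 2) (τ := 1 + 71/125) 13 20 (by norm_num) (by norm_num)
        (by norm_num) (by norm_num)
      push_cast at this; exact this
    have hτ : (127/200 : ℝ) ≤ (71/125 : ℝ) ^ ((4:ℝ)/5) := by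
      have := aux_rat_pow (r := 71/125) (τ := 127/200) 4 5 (by norm_num) (by norm_num)
        (by norm_num) (by norm_num)
      push_cast at this; exact this
    exact aux_interval hq0 hc2 hc3 h2 (by norm_num) hra (by norm_num) hτ (by norm_num)
  · have hra : (1:ℝ) + 37/50 ≤ (2:ℝ) ^ ((4:ℝ)/5) := by
      have := aux_rat_pow (r := 2) (τ := 1 + 37/50) 4 5 (by norm_num) (by norm_num)
        (by norm_num) (by norm_num)
      push_cast at this; exact this
    have hτ : (37/50 : ℝ) ≤ (37/50 : ℝ) ^ ((1:ℝ)) := by rw [Real.rpow_one]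
    exact aux_interval hq0 hc3 h2 h2 (by norm_num) hra (by norm_num) hτ (by norm_num)

end AuxLemmas

/-- Scalar core of the bad-part control lemma: for `1 < p < 2`, nonnegative
measurable `g, b` and `Λ^p = ∫(g²+b²)^{p/2} dω − ∫ g^p dω`, with `η = 1/2` one has
`∫ b^p dω ≤ max{η^{−p−3} Λ^p, (1−η)^{−1} (Λ^p)^{p/2} (∫ g^p dω)^{1−p/2}}`. -/
theorem stmt11 (p : ℝ) (hp1 : 1 < p) (hp2 : p < 2) (ω : Measure ℝ)
    (g b : ℝ → ℝ) (hg : ∀ x, 0 ≤ g x) (hb : ∀ x, 0 ≤ b x)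
    (hgm : Measurable g) (hbm : Measurable b)
    (hint1 : Integrable (fun x => ((g x) ^ 2 + (b x) ^ 2) ^ (p / 2)) ω)
    (hint2 : Integrable (fun x => (g x) ^ p) ω)
    (hint3 : Integrable (fun x => (b x) ^ p) ω) :
    ∫ x, (b x) ^ p ∂ω ≤
      max (((1 : ℝ) / 2) ^ (-p - 3) *
            ((∫ x, ((g x) ^ 2 + (b x) ^ 2) ^ (p / 2) ∂ω) - ∫ x, (g x) ^ p ∂ω))
          ((1 - (1 : ℝ) / 2)⁻¹ *
            ((∫ x, ((g x) ^ 2 + (b x) ^ 2) ^ (p / 2) ∂ω) - ∫ x, (g x) ^ p ∂ω) ^ (p / 2) *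
            (∫ x, (g x) ^ p ∂ω) ^ (1 - p / 2)) := by
  have hp0 : 0 < p := by linarith
  set q : ℝ := p/2 with hqdef
  have hq0 : 0 < q := by rw [hqdef]; linarith
  have hq1 : q < 1 := by rw [hqdef]; linarith
  have hq2 : 1/2 < q := by rw [hqdef]; linarith
  have hp2q : p = 2*q := by rw [hqdef]; ring
  -- squares to rpow
  have hsq : ∀ y : ℝ, 0 ≤ y → ((y^2 : ℝ)) ^ q = y ^ p := by
    intro y hy
    rw [← Real.rpow_natCast y 2, ← Real.rpow_mul hy, hp2q]
    norm_num
  set c : ℝ := 2^q - 1 with hcdef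
  have h2q_gt : (1:ℝ) < 2^q := by
    have := Real.rpow_lt_rpow_of_exponent_lt (one_lt_two (α := ℝ)) hq0
    simpa using this
  have hc0 : 0 < c := by rw [hcdef]; linarith
  set φ : ℝ → ℝ := fun x => ((g x)^2 + (b x)^2) ^ q - (g x)^p with hφdef
  have hφint : Integrable φ ω := hint1.sub hint2
  have hφ0 : ∀ x, 0 ≤ φ x := by
    intro x
    have h1 : (g x)^p = ((g x)^2 : ℝ) ^ q := (hsq _ (hg x)).symm
    have h2 : ((g x)^2 : ℝ) ^ q ≤ ((g x)^2 + (b x)^2) ^ q :=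
      Real.rpow_le_rpow (sq_nonneg _) (by nlinarith [sq_nonneg (b x)]) hq0.le
    simp only [hφdef, sub_nonneg]
    rw [h1]; exact h2
  set T : ℝ := ∫ x, ((g x)^2 + (b x)^2) ^ q ∂ω with hTdef
  set G : ℝ := ∫ x, (g x)^p ∂ω with hGdef
  have hTG : ∫ x, φ x ∂ω = T - G := integral_sub hint1 hint2
  have hD0 : 0 ≤ T - G := by
    rw [← hTG]; exact integral_nonneg hφ0
  have hG0 : 0 ≤ G := integral_nonneg (fun x => Real.rpow_nonneg (hg x) p)
  set S : Set ℝ := {x | b x ≤ g x} with hSdef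
  have hSm : MeasurableSet S := measurableSet_le hbm hgm
  -- region Sᶜ : b > g
  have hBc : ∀ x ∈ Sᶜ, c * (b x)^p ≤ φ x := by
    intro x hx
    have hgb : g x < b x := by
      simp only [hSdef, Set.mem_compl_iff, Set.mem_setOf_eq, not_le] at hx
      exact hx
    have hsq_le : (g x)^2 ≤ (b x)^2 := by nlinarith [hg x]
    have key := aux_concave_shift hq0 hq1 (sq_nonneg (g x)) hsq_le
    have h2t : ((2*(b x)^2 : ℝ)) ^ q = 2^q * (((b x)^2 : ℝ))^q :=
      Real.mul_rpow (by norm_num) (sq_nonneg _)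
    have e1 : ((g x)^2 : ℝ)^q = (g x)^p := hsq _ (hg x)
    have e2 : ((b x)^2 : ℝ)^q = (b x)^p := hsq _ (hb x)
    simp only [hφdef, hcdef]
    rw [h2t, e1, e2] at key
    nlinarith [key]
  have hIB : ∫ x in Sᶜ, (b x)^p ∂ω ≤ c⁻¹ * (T - G) := by
    have h1 : ∫ x in Sᶜ, c * (b x)^p ∂ω ≤ ∫ x in Sᶜ, φ x ∂ω :=
      setIntegral_mono_on ((hint3.const_mul c).integrableOn)
        hφint.integrableOn hSm.compl (fun x hx => hBc x hx)
    rw [integral_const_mul] at h1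
    have h2 : ∫ x in Sᶜ, φ x ∂ω ≤ ∫ x, φ x ∂ω :=
      setIntegral_le_integral hφint (Filter.Eventually.of_forall hφ0)
    rw [hTG] at h2
    have hc' : 0 ≤ c⁻¹ := inv_nonneg.2 hc0.le
    calc ∫ x in Sᶜ, (b x)^p ∂ω = c⁻¹ * (c * ∫ x in Sᶜ, (b x)^p ∂ω) := by
          field_simp
      _ ≤ c⁻¹ * (T - G) := mul_le_mul_of_nonneg_left (by linarith) hc'
  -- region S : b ≤ g
  set w : ℝ → ℝ := fun x => (b x)^2 * (((g x)^2 : ℝ)) ^ (q-1) with hwdef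
  have hw0 : ∀ x, 0 ≤ w x := fun x => mul_nonneg (sq_nonneg _) (Real.rpow_nonneg (sq_nonneg _) _)
  have hwm : Measurable w := (hbm.pow_const 2).mul ((hgm.pow_const 2).pow measurable_const)
  have hSc : ∀ x ∈ S, c * w x ≤ φ x := by
    intro x hx
    have hbg : b x ≤ g x := hx
    have hsq_le : (b x)^2 ≤ (g x)^2 := by nlinarith [hb x]
    have key := aux_chord hq0 hq1 (sq_nonneg (b x)) hsq_le
    have e1 : ((g x)^2 : ℝ)^q = (g x)^p := hsq _ (hg x)
    rw [e1] at key
    simp only [hφdef, hcdef, hwdef]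
    nlinarith [key]
  have hwb : ∀ x ∈ S, w x ≤ (b x)^p := by
    intro x hx
    have hbg : b x ≤ g x := hx
    rcases eq_or_lt_of_le (hb x) with hb0 | hb0
    · simp only [hwdef, ← hb0]
      rw [Real.zero_rpow hp0.ne']
      norm_num
    · have hg0 : 0 < g x := lt_of_lt_of_le hb0 hx
      have h1 : (((g x)^2 : ℝ)) ^ (q-1) ≤ (((b x)^2 : ℝ)) ^ (q-1) :=
        Real.rpow_le_rpow_of_nonpos (by positivity) (by nlinarith [hbg, hb x]) (by linarith)
      have h2 : (b x)^2 * (((b x)^2 : ℝ))^(q-1) = (b x)^p := by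
        have hbb : (0:ℝ) < (b x)^2 := by positivity
        calc (b x)^2 * (((b x)^2 : ℝ))^(q-1)
            = (((b x)^2 : ℝ))^(1:ℝ) * (((b x)^2 : ℝ))^(q-1) := by rw [Real.rpow_one]
          _ = (((b x)^2 : ℝ))^(1 + (q-1)) := (Real.rpow_add hbb 1 (q-1)).symm
          _ = (((b x)^2 : ℝ))^q := by ring_nf
          _ = (b x)^p := hsq _ (hb x)
      calc w x = (b x)^2 * (((g x)^2 : ℝ)) ^ (q-1) := rfl
        _ ≤ (b x)^2 * (((b x)^2 : ℝ)) ^ (q-1) :=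
            mul_le_mul_of_nonneg_left h1 (sq_nonneg _)
        _ = (b x)^p := h2
  have hwint : IntegrableOn w S ω := by
    apply Integrable.mono' hint3.integrableOn hwm.aestronglyMeasurable.restrict
    rw [ae_restrict_iff' hSm]
    exact Filter.Eventually.of_forall
      (fun x hx => by rw [Real.norm_of_nonneg (hw0 x)]; exact hwb x hx)
  have hwD : ∫ x in S, w x ∂ω ≤ c⁻¹ * (T - G) := by
    have h1 : ∫ x in S, c * w x ∂ω ≤ ∫ x in S, φ x ∂ω :=
      setIntegral_mono_on (hwint.const_mul c)
        hφint.integrableOn hSm (fun x hx => hSc x hx)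
    rw [integral_const_mul] at h1
    have h2 : ∫ x in S, φ x ∂ω ≤ ∫ x, φ x ∂ω :=
      setIntegral_le_integral hφint (Filter.Eventually.of_forall hφ0)
    rw [hTG] at h2
    have hc' : 0 ≤ c⁻¹ := inv_nonneg.2 hc0.le
    calc ∫ x in S, w x ∂ω = c⁻¹ * (c * ∫ x in S, w x ∂ω) := by field_simp
      _ ≤ c⁻¹ * (T - G) := mul_le_mul_of_nonneg_left (by linarith) hc'
  -- Hölder on S
  have hq1' : 0 < 1 - q := by linarith
  have hconj : Real.HolderConjugate (1/q) (1/(1-q)) := by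
    rw [Real.holderConjugate_iff]
    constructor
    · rw [lt_div_iff₀ hq0]; linarith
    · rw [one_div, one_div, inv_inv, inv_inv]; ring
  have hfmem : MemLp (fun x => (w x)^q) (ENNReal.ofReal (1/q)) (ω.restrict S) := by
    have h1 : MemLp w 1 (ω.restrict S) := memLp_one_iff_integrable.2 hwint
    have h2 := h1.norm_rpow_div (ENNReal.ofReal q)
    have e1 : (fun x => ‖w x‖ ^ (ENNReal.ofReal q).toReal) = fun x => (w x)^q := by
      funext x
      rw [ENNReal.toReal_ofReal hq0.le, Real.norm_of_nonneg (hw0 x)]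
    have e2 : (1 : ℝ≥0∞) / ENNReal.ofReal q = ENNReal.ofReal (1/q) := by
      rw [ENNReal.ofReal_div_of_pos hq0, ENNReal.ofReal_one]
    rw [e1, e2] at h2
    exact h2
  have hgmem : MemLp (fun x => ((g x)^p)^(1-q)) (ENNReal.ofReal (1/(1-q))) (ω.restrict S) := by
    have h1 : MemLp (fun x => (g x)^p) 1 (ω.restrict S) :=
      memLp_one_iff_integrable.2 hint2.integrableOn
    have h2 := h1.norm_rpow_div (ENNReal.ofReal (1-q))
    have e1 : (fun x => ‖(g x)^p‖ ^ (ENNReal.ofReal (1-q)).toReal)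
        = fun x => ((g x)^p)^(1-q) := by
      funext x
      rw [ENNReal.toReal_ofReal hq1'.le, Real.norm_of_nonneg (Real.rpow_nonneg (hg x) p)]
    have e2 : (1 : ℝ≥0∞) / ENNReal.ofReal (1-q) = ENNReal.ofReal (1/(1-q)) := by
      rw [ENNReal.ofReal_div_of_pos hq1', ENNReal.ofReal_one]
    rw [e1, e2] at h2
    exact h2
  have holder := integral_mul_le_Lp_mul_Lq_of_nonneg hconj
    (Filter.Eventually.of_forall (fun x => Real.rpow_nonneg (hw0 x) q))
    (Filter.Eventually.of_forall (fun x => Real.rpow_nonneg (Real.rpow_nonneg (hg x) p) (1-q)))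
    hfmem hgmem
  -- simplify the Hölder inequality
  have ef : ∀ x : ℝ, ((w x)^q) ^ (1/q) = w x := by
    intro x
    rw [← Real.rpow_mul (hw0 x), mul_one_div, div_self hq0.ne', Real.rpow_one]
  have eg : ∀ x : ℝ, (((g x)^p)^(1-q)) ^ (1/(1-q)) = (g x)^p := by
    intro x
    rw [← Real.rpow_mul (Real.rpow_nonneg (hg x) p), mul_one_div, div_self hq1'.ne',
      Real.rpow_one]
  simp only [ef, eg, one_div_one_div] at holder
  -- identify LHS of Hölder with ∫_S b^p
  have hIA0 : ∫ x in S, (b x)^p ∂ω = ∫ x in S, (w x)^q * (((g x)^p)^(1-q)) ∂ω := by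
    apply setIntegral_congr_fun hSm
    intro x hx
    show b x ^ p = w x ^ q * ((g x ^ p) ^ (1 - q))
    have hbg : b x ≤ g x := hx
    rcases eq_or_lt_of_le (hg x) with hg0 | hg0
    · have hbx : b x = 0 := le_antisymm (by rw [← hg0] at hbg; exact hbg) (hb x)
      have hw : w x = 0 := by
        simp only [hwdef, hbx]
        norm_num
      rw [hbx, hw, Real.zero_rpow hp0.ne', Real.zero_rpow hq0.ne', zero_mul]
    · have hg2 : (0:ℝ) < (g x)^2 := by positivity
      have e1 : (w x)^q = ((b x)^p) * (((g x)^2:ℝ))^((q-1)*q) := by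
        simp only [hwdef]
        rw [Real.mul_rpow (sq_nonneg _) (Real.rpow_nonneg (sq_nonneg _) _),
          ← Real.rpow_natCast (b x) 2, ← Real.rpow_mul (hb x),
          ← Real.rpow_mul (sq_nonneg (g x))]
        push_cast
        rw [hp2q]
      have e2 : (((g x)^p)^(1-q)) = (((g x)^2:ℝ))^(q*(1-q)) := by
        rw [← hsq _ (hg x), ← Real.rpow_mul (sq_nonneg (g x))]
      rw [e1, e2, mul_assoc, ← Real.rpow_add hg2]
      have : (q-1)*q + q*(1-q) = 0 := by ring
      rw [this, Real.rpow_zero, mul_one]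
  -- combine Hölder
  have hwS0 : 0 ≤ ∫ x in S, w x ∂ω := setIntegral_nonneg hSm (fun x _ => hw0 x)
  have hgS : ∫ x in S, (g x)^p ∂ω ≤ G :=
    setIntegral_le_integral hint2 (Filter.Eventually.of_forall
      (fun x => Real.rpow_nonneg (hg x) p))
  have hgS0 : 0 ≤ ∫ x in S, (g x)^p ∂ω :=
    setIntegral_nonneg hSm (fun x _ => Real.rpow_nonneg (hg x) p)
  have hcD0 : 0 ≤ c⁻¹ * (T - G) := mul_nonneg (inv_nonneg.2 hc0.le) hD0
  have hIA : ∫ x in S, (b x)^p ∂ω ≤ (c⁻¹ * (T-G))^q * G^(1-q) := by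
    rw [hIA0]
    refine le_trans holder ?_
    exact mul_le_mul (Real.rpow_le_rpow hwS0 hwD hq0.le)
      (Real.rpow_le_rpow hgS0 hgS hq1'.le) (Real.rpow_nonneg hgS0 _)
      (Real.rpow_nonneg hcD0 _)
  -- final combination
  have hsplit : ∫ x, (b x)^p ∂ω = (∫ x in S, (b x)^p ∂ω) + ∫ x in Sᶜ, (b x)^p ∂ω :=
    (integral_add_compl hSm hint3).symm
  have hhalf : ((1:ℝ)/2)^(-p-3) = (2:ℝ)^(p+3) := by
    rw [one_div, Real.inv_rpow (by norm_num : (0:ℝ) ≤ 2),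
      ← Real.rpow_neg (by norm_num : (0:ℝ) ≤ 2)]
    congr 1
    ring
  have h2inv : (1 - (1:ℝ)/2)⁻¹ = 2 := by norm_num
  rw [hhalf, h2inv]
  have h2p3 : (0:ℝ) < (2:ℝ)^(p+3) := Real.rpow_pos_of_pos two_pos _
  set M : ℝ := max ((2:ℝ)^(p+3) * (T - G)) (2 * (T-G)^q * G^(1-q)) with hMdef
  have hM2 : 2 * (T-G)^q * G^(1-q) ≤ M := le_max_right _ _
  have hM1 : (2:ℝ)^(p+3) * (T - G) ≤ M := le_max_left _ _
  have hM0 : 0 ≤ M := le_trans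
    (mul_nonneg (mul_nonneg two_pos.le (Real.rpow_nonneg hD0 q)) (Real.rpow_nonneg hG0 _)) hM2
  have numeric : ((c:ℝ)^q)⁻¹/2 + c⁻¹ * ((2:ℝ)^(p+3))⁻¹ ≤ 1 := by
    have := aux_numeric (q := q) (by linarith) (by linarith)
    rw [show (2*q+3 : ℝ) = p + 3 by rw [hp2q]] at this
    rw [hcdef]
    exact this
  have hcq0 : (0:ℝ) < c^q := Real.rpow_pos_of_pos hc0 q
  have expand : (c⁻¹ * (T-G))^q = (c^q)⁻¹ * (T-G)^q := by
    rw [Real.mul_rpow (inv_nonneg.2 hc0.le) hD0, Real.inv_rpow hc0.le]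
  calc ∫ x, (b x)^p ∂ω
      = (∫ x in S, (b x)^p ∂ω) + ∫ x in Sᶜ, (b x)^p ∂ω := hsplit
    _ ≤ (c⁻¹ * (T-G))^q * G^(1-q) + c⁻¹ * (T - G) := add_le_add hIA hIB
    _ = ((c^q)⁻¹/2) * (2 * (T-G)^q * G^(1-q))
        + (c⁻¹ * ((2:ℝ)^(p+3))⁻¹) * ((2:ℝ)^(p+3) * (T - G)) := by
        rw [expand]; field_simp
    _ ≤ ((c^q)⁻¹/2) * M + (c⁻¹ * ((2:ℝ)^(p+3))⁻¹) * M := by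
        apply add_le_add
        · exact mul_le_mul_of_nonneg_left hM2 (by positivity)
        · exact mul_le_mul_of_nonneg_left hM1 (by positivity)
    _ = (((c:ℝ)^q)⁻¹/2 + c⁻¹ * ((2:ℝ)^(p+3))⁻¹) * M := by ring
    _ ≤ 1 * M := mul_le_mul_of_nonneg_right numeric hM0
    _ = M := one_mul M
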